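/- Let R, S be rings, A, B unital subrings of R, X an invertible A-B-submodule of R, and M, N two R-S-bimodules. For every map f : M → N that is simultaneously left B-linear (on the unital submodules BM, BN) and right S-linear, there exists a unique map f^X : AM → AN that is left A-linear and right S-linear and satisfies f^X(x m) = x f(1_B m) for all x in X and m in M. -/

import Mathlib

open Pointwise

/-- `A` is a unital subring of the (possibly non-unital) ring `R`, with identity element
`oneA` (not necessarily an identity of `R`). -/
structure IsUnitalSubring {R : Type*} [NonUnitalRing R] (A : AddSubgroup R) (oneA : R) : Prop where
  one_mem : oneA ∈ A
  mul_mem : ∀ ⦃a⦄, a ∈ A → ∀ ⦃b⦄, b ∈ A → a * b ∈ A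
  one_mul : ∀ a ∈ A, oneA * a = a
  mul_one : ∀ a ∈ A, a * oneA = a

/-- `X` is an invertible (unital) `A`-`B`-submodule of `R` with inverse `Xinv`:
`X Xinv = A` and `Xinv X = B`, where products denote the additive subgroup generated by
all products (i.e. finite sums of products). -/
structure IsInvertibleSubmodule {R : Type*} [NonUnitalRing R]
    (A B : AddSubgroup R) (oneA oneB : R) (X Xinv : AddSubgroup R) : Prop where
  unitalA : IsUnitalSubring A oneA
  unitalB : IsUnitalSubring B oneB
  smul_mem : ∀ ⦃a⦄, a ∈ A → ∀ ⦃x⦄, x ∈ X → a * x ∈ X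
  mem_smul : ∀ ⦃x⦄, x ∈ X → ∀ ⦃b⦄, b ∈ B → x * b ∈ X
  one_smul : ∀ x ∈ X, oneA * x = x
  smul_one : ∀ x ∈ X, x * oneB = x
  smul_mem' : ∀ ⦃b⦄, b ∈ B → ∀ ⦃y⦄, y ∈ Xinv → b * y ∈ Xinv
  mem_smul' : ∀ ⦃y⦄, y ∈ Xinv → ∀ ⦃a⦄, a ∈ A → y * a ∈ Xinv
  one_smul' : ∀ y ∈ Xinv, oneB * y = y
  smul_one' : ∀ y ∈ Xinv, y * oneA = y
  mul_inv : X * Xinv = A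
  inv_mul : Xinv * X = B

/-- The ring structure on a unital subring of `R`. -/
def IsUnitalSubring.ring {R : Type*} [NonUnitalRing R] {A : AddSubgroup R} {oneA : R}
    (h : IsUnitalSubring A oneA) : Ring A :=
  { (inferInstance : AddCommGroup A) with
    mul := fun a b => ⟨a.1 * b.1, h.mul_mem a.2 b.2⟩
    one := ⟨oneA, h.one_mem⟩
    mul_assoc := fun a b c => Subtype.ext (mul_assoc a.1 b.1 c.1)
    one_mul := fun a => Subtype.ext (h.one_mul a.1 a.2)
    mul_one := fun a => Subtype.ext (h.mul_one a.1 a.2)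
    left_distrib := fun a b c => Subtype.ext (mul_add a.1 b.1 c.1)
    right_distrib := fun a b c => Subtype.ext (add_mul a.1 b.1 c.1)
    zero_mul := fun a => Subtype.ext (zero_mul a.1)
    mul_zero := fun a => Subtype.ext (mul_zero a.1) }


/-- `M` is an `R`-`S`-bimodule via the left action `ρ` and the right action `τ`. -/
structure IsBimodule (R S M : Type*) [NonUnitalRing R] [NonUnitalRing S] [AddCommGroup M]
    (ρ : R → M → M) (τ : M → S → M) : Prop where
  add_smul : ∀ r r' m, ρ (r + r') m = ρ r m + ρ r' m
  smul_add : ∀ r m m', ρ r (m + m') = ρ r m + ρ r m'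
  mul_smul : ∀ r r' m, ρ (r * r') m = ρ r (ρ r' m)
  smul_add' : ∀ m m' s, τ (m + m') s = τ m s + τ m' s
  add_smul' : ∀ m s s', τ m (s + s') = τ m s + τ m s'
  smul_mul' : ∀ m s s', τ m (s * s') = τ (τ m s) s'
  smul_comm : ∀ r m s, τ (ρ r m) s = ρ r (τ m s)

/-- For a subring `A` of `R`, the sub-bimodule `AM` of `M`: the additive subgroup generated
by all products `a • m` with `a ∈ A`, `m ∈ M`. -/
def actSpan {R M : Type*} [NonUnitalRing R] [AddCommGroup M]
    (ρ : R → M → M) (A : AddSubgroup R) : AddSubgroup M :=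
  AddSubgroup.closure {x | ∃ a ∈ A, ∃ m : M, x = ρ a m}

/-- `f` belongs to `Hom_{B,S}(BM, BN)`: it maps `BM` to `BN` and is left `B`-linear and
right `S`-linear there. -/
def IsHomBS {R S M N : Type*} [NonUnitalRing R] [NonUnitalRing S]
    [AddCommGroup M] [AddCommGroup N]
    (B : AddSubgroup R) (ρM : R → M → M) (τM : M → S → M)
    (ρN : R → N → N) (τN : N → S → N) (f : M → N) : Prop :=
  (∀ m ∈ actSpan ρM B, f m ∈ actSpan ρN B) ∧
  (∀ m ∈ actSpan ρM B, ∀ m' ∈ actSpan ρM B, f (m + m') = f m + f m') ∧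
  (∀ b ∈ B, ∀ m ∈ actSpan ρM B, f (ρM b m) = ρN b (f m)) ∧
  (∀ m ∈ actSpan ρM B, ∀ s : S, f (τM m s) = τN (f m) s)

/-- `g` is the map `f^X ∈ Hom_{A,S}(AM, AN)` induced by `f ∈ Hom_{B,S}(BM, BN)` along the
invertible `A`-`B`-submodule `X`, i.e. it is left `A`-linear and right `S`-linear on `AM` and
satisfies `g (x • m) = x • f (1_B • m)` for all `x ∈ X`, `m ∈ M`. -/
def IsInducedMap {R S M N : Type*} [NonUnitalRing R] [NonUnitalRing S]
    [AddCommGroup M] [AddCommGroup N]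
    (A : AddSubgroup R) (oneB : R) (X : AddSubgroup R)
    (ρM : R → M → M) (τM : M → S → M)
    (ρN : R → N → N) (τN : N → S → N) (f g : M → N) : Prop :=
  (∀ m ∈ actSpan ρM A, g m ∈ actSpan ρN A) ∧
  (∀ m ∈ actSpan ρM A, ∀ m' ∈ actSpan ρM A, g (m + m') = g m + g m') ∧
  (∀ a ∈ A, ∀ m ∈ actSpan ρM A, g (ρM a m) = ρN a (g m)) ∧
  (∀ m ∈ actSpan ρM A, ∀ s : S, g (τM m s) = τN (g m) s) ∧
  (∀ x ∈ X, ∀ m : M, g (ρM x m) = ρN x (f (ρM oneB m)))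


private theorem self_add_self_helper {G : Type*} [AddGroup G] {n : G} (h : n = n + n) :
    n = 0 := by
  have h2 : n + n = n + 0 := by rw [add_zero]; exact h.symm
  exact add_left_cancel h2

private theorem listSum_add_helper {α N : Type*} [AddCommMonoid N] (l : List α) (F G : α → N) :
    (l.map fun p => F p + G p).sum = (l.map F).sum + (l.map G).sum := by
  induction l with
  | nil => simp
  | cons a t ih =>
    simp only [List.map_cons, List.sum_cons, ih]
    abel

private theorem map_listSum_helper {α N N' : Type*} [AddCommMonoid N] [AddCommMonoid N']
    (φ : N → N') (h0 : φ 0 = 0) (hadd : ∀ a b, φ (a + b) = φ a + φ b)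
    (l : List α) (F : α → N) : φ (l.map F).sum = (l.map fun p => φ (F p)).sum := by
  induction l with
  | nil => simpa
  | cons a t ih => simp only [List.map_cons, List.sum_cons, hadd, ih]

private theorem memMul_helper {R : Type*} [NonUnitalNonAssocRing R] {X Y : AddSubgroup R}
    {a b : R} (ha : a ∈ X) (hb : b ∈ Y) : a * b ∈ X * Y := by
  have h : a * b ∈ X.toAddSubmonoid * Y.toAddSubmonoid := AddSubmonoid.mul_mem_mul ha hb
  rwa [← AddSubgroup.mul_toAddSubmonoid, AddSubgroup.mem_toAddSubmonoid] at h

private theorem mem_mul_toAddSubmonoid_helper {R : Type*} [NonUnitalNonAssocRing R]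
    {X Y : AddSubgroup R} {a : R} (h : a ∈ X * Y) :
    a ∈ X.toAddSubmonoid * Y.toAddSubmonoid := by
  rwa [← AddSubgroup.mul_toAddSubmonoid, AddSubgroup.mem_toAddSubmonoid]

private theorem memMul_list_helper {R : Type*} [NonUnitalNonAssocRing R] {X Y : AddSubgroup R}
    {a : R} (h : a ∈ X * Y) :
    ∃ l : List (R × R), (∀ p ∈ l, p.1 ∈ X ∧ p.2 ∈ Y) ∧
      a = (l.map fun p => p.1 * p.2).sum := by
  refine AddSubmonoid.mul_induction_on (mem_mul_toAddSubmonoid_helper h) ?_ ?_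
  · intro m hm n hn
    refine ⟨[(m, n)], ?_, by simp⟩
    rintro p hp
    simp only [List.mem_singleton] at hp
    subst hp
    exact ⟨hm, hn⟩
  · rintro r₁ r₂ ⟨l₁, h₁, e₁⟩ ⟨l₂, h₂, e₂⟩
    refine ⟨l₁ ++ l₂, ?_, by simp [e₁, e₂]⟩
    intro p hp
    rcases List.mem_append.1 hp with h | h
    · exact h₁ p h
    · exact h₂ p h

/-- For every `f ∈ Hom_{B,S}(BM, BN)` there is a unique induced map
`f^X ∈ Hom_{A,S}(AM, AN)` with `f^X (x m) = x f (1_B m)` for all `x ∈ X`, `m ∈ M`. -/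
theorem exists_unique_inducedMap {R S M N : Type*} [NonUnitalRing R] [NonUnitalRing S]
    [AddCommGroup M] [AddCommGroup N]
    (A B : AddSubgroup R) (oneA oneB : R) (X Xinv : AddSubgroup R)
    (hX : IsInvertibleSubmodule A B oneA oneB X Xinv)
    (ρM : R → M → M) (τM : M → S → M) (ρN : R → N → N) (τN : N → S → N)
    (hM : IsBimodule R S M ρM τM) (hN : IsBimodule R S N ρN τN)
    (f : M → N) (hf : IsHomBS B ρM τM ρN τN f) :
    ∃ g : M → N, IsInducedMap A oneB X ρM τM ρN τN f g ∧
      ∀ g' : M → N, IsInducedMap A oneB X ρM τM ρN τN f g' →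
        Set.EqOn g' g (actSpan ρM A) := by
  
  classical
  obtain ⟨hf1, hf2, hf3, hf4⟩ := hf
  have h1B := hX.unitalB.one_mem
  have h1A := hX.unitalA.one_mem
  -- zero laws
  have ρM0 : ∀ m : M, ρM 0 m = 0 := fun m =>
    self_add_self_helper (by rw [← hM.add_smul, add_zero])
  have ρN0 : ∀ n : N, ρN 0 n = 0 := fun n =>
    self_add_self_helper (by rw [← hN.add_smul, add_zero])
  have ρN0' : ∀ r : R, ρN r (0 : N) = 0 := fun r =>
    self_add_self_helper (by rw [← hN.smul_add, add_zero])
  -- memberships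
  have hBM : ∀ b ∈ B, ∀ m : M, ρM b m ∈ actSpan ρM B := fun b hb m =>
    AddSubgroup.subset_closure ⟨b, hb, m, rfl⟩
  have hBMy : ∀ y ∈ Xinv, ∀ m : M, ρM y m ∈ actSpan ρM B := fun y hy m => by
    rw [← hX.one_smul' y hy, hM.mul_smul]
    exact hBM _ h1B _
  have hAN : ∀ x ∈ X, ∀ n : N, ρN x n ∈ actSpan ρN A := fun x hx n => by
    rw [← hX.one_smul x hx, hN.mul_smul]
    exact AddSubgroup.subset_closure ⟨oneA, h1A, _, rfl⟩
  have hAM : ∀ a ∈ A, ∀ m : M, ρM a m ∈ actSpan ρM A := fun a ha m =>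
    AddSubgroup.subset_closure ⟨a, ha, m, rfl⟩
  -- f facts
  have f0 : f 0 = 0 := self_add_self_helper (by
    rw [← hf2 0 (zero_mem _) 0 (zero_mem _), add_zero])
  have fB : ∀ b ∈ B, ∀ m : M, f (ρM b m) = ρN b (f (ρM oneB m)) := fun b hb m => by
    conv_lhs => rw [← hX.unitalB.mul_one b hb, hM.mul_smul]
    exact hf3 b hb _ (hBM _ h1B m)
  have fsum : ∀ (l' : List (R × R)) (F : R × R → M), (∀ p ∈ l', F p ∈ actSpan ρM B) →
      f (l'.map F).sum = (l'.map fun p => f (F p)).sum := by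
    intro l' F hmem
    induction l' with
    | nil => simpa using f0
    | cons a t ih =>
      simp only [List.map_cons, List.sum_cons]
      rw [hf2 _ (hmem a (List.mem_cons_self)) _ (list_sum_mem (fun x hx => by
            obtain ⟨p, hp, rfl⟩ := List.mem_map.1 hx
            exact hmem p (List.mem_cons_of_mem a hp))),
        ih (fun p hp => hmem p (List.mem_cons_of_mem a hp))]
  -- representation of oneA
  obtain ⟨l, hl, hsum⟩ := memMul_list_helper (X := X) (Y := Xinv)
    (show oneA ∈ X * Xinv from hX.mul_inv.symm ▸ h1A)
  -- the induced map
  set g : M → N := fun m => (l.map fun p => ρN p.1 (f (ρM p.2 m))).sum with hgdef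
  have gdef : ∀ m : M, g m = (l.map fun p => ρN p.1 (f (ρM p.2 m))).sum := fun m => rfl
  -- additivity of g on all of M
  have gadd : ∀ m m' : M, g (m + m') = g m + g m' := by
    intro m m'
    rw [gdef, gdef, gdef,
      ← listSum_add_helper l (fun p => ρN p.1 (f (ρM p.2 m))) (fun p => ρN p.1 (f (ρM p.2 m')))]
    refine congrArg List.sum (List.map_congr_left ?_)
    intro p hp
    show ρN p.1 (f (ρM p.2 (m + m'))) = ρN p.1 (f (ρM p.2 m)) + ρN p.1 (f (ρM p.2 m'))
    rw [hM.smul_add, hf2 _ (hBMy _ (hl p hp).2 m) _ (hBMy _ (hl p hp).2 m'), hN.smul_add]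
  have g0 : g 0 = 0 := self_add_self_helper (by rw [← gadd 0 0, add_zero])
  have gneg : ∀ m : M, g (-m) = -(g m) := by
    intro m
    have h := gadd m (-m)
    rw [show m + -m = (0 : M) by abel, g0] at h
    exact eq_neg_of_add_eq_zero_right h.symm
  -- g commutes with the right S-action
  have gtau : ∀ (m : M) (s : S), g (τM m s) = τN (g m) s := by
    intro m s
    have τN0 : τN (0 : N) s = 0 := self_add_self_helper (by rw [← hN.smul_add', add_zero])
    rw [gdef, gdef,
      map_listSum_helper (fun n => τN n s) τN0 (fun a b => hN.smul_add' a b s) l _]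
    refine congrArg List.sum (List.map_congr_left ?_)
    intro p hp
    show ρN p.1 (f (ρM p.2 (τM m s))) = τN (ρN p.1 (f (ρM p.2 m))) s
    rw [hN.smul_comm, ← hf4 _ (hBMy _ (hl p hp).2 m) s, hM.smul_comm]
  -- the key property on X
  have gX : ∀ x ∈ X, ∀ m : M, g (ρM x m) = ρN x (f (ρM oneB m)) := by
    intro x hx m
    rw [gdef]
    have step : ∀ p ∈ l, ρN p.1 (f (ρM p.2 (ρM x m))) = ρN (p.1 * p.2 * x) (f (ρM oneB m)) := by
      intro p hp
      have hb : p.2 * x ∈ B := hX.inv_mul ▸ memMul_helper (hl p hp).2 hx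
      rw [← hM.mul_smul, fB _ hb, ← hN.mul_smul, ← mul_assoc]
    rw [List.map_congr_left step]
    have e1 : (l.map fun p => ρN (p.1 * p.2 * x) (f (ρM oneB m))).sum
        = ρN ((l.map fun p => p.1 * p.2 * x).sum) (f (ρM oneB m)) :=
      (map_listSum_helper (fun r => ρN r (f (ρM oneB m))) (ρN0 _)
        (fun a b => hN.add_smul a b _) l _).symm
    have e2 : (l.map fun p => p.1 * p.2 * x).sum = (l.map fun p => p.1 * p.2).sum * x :=
      (map_listSum_helper (fun r => r * x) (zero_mul x) (fun a b => add_mul a b x) l _).symm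
    rw [e1, e2, ← hsum, hX.one_smul x hx]
  -- g lands in AN
  have gAN : ∀ m : M, g m ∈ actSpan ρN A := by
    intro m
    rw [gdef]
    refine list_sum_mem ?_
    intro n hn
    obtain ⟨p, hp, rfl⟩ := List.mem_map.1 hn
    exact hAN _ (hl p hp).1 _
  -- the auxiliary identity on Xinv
  have hL : ∀ y ∈ Xinv, ∀ m : M, ρN y (g m) = f (ρM y m) := by
    intro y hy m
    rw [gdef, map_listSum_helper (fun n => ρN y n) (ρN0' y) (fun a b => hN.smul_add y a b) l _]
    have step : ∀ p ∈ l, ρN y (ρN p.1 (f (ρM p.2 m))) = f (ρM (y * (p.1 * p.2)) m) := by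
      intro p hp
      have hb : y * p.1 ∈ B := hX.inv_mul ▸ memMul_helper hy (hl p hp).1
      rw [← hN.mul_smul, ← hf3 _ hb _ (hBMy _ (hl p hp).2 m), ← hM.mul_smul, mul_assoc]
    rw [List.map_congr_left step]
    have e1 : (l.map fun p => f (ρM (y * (p.1 * p.2)) m)).sum
        = f ((l.map fun p => ρM (y * (p.1 * p.2)) m).sum) :=
      (fsum l (fun p => ρM (y * (p.1 * p.2)) m) (fun p hp => by
        show ρM (y * (p.1 * p.2)) m ∈ actSpan ρM B
        rw [← mul_assoc, hM.mul_smul]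
        exact hBM _ (hX.inv_mul ▸ memMul_helper hy (hl p hp).1) _)).symm
    have e2 : (l.map fun p => ρM (y * (p.1 * p.2)) m).sum
        = ρM ((l.map fun p => y * (p.1 * p.2)).sum) m :=
      (map_listSum_helper (fun r => ρM r m) (ρM0 m) (fun a b => hM.add_smul a b m) l _).symm
    have e3 : (l.map fun p => y * (p.1 * p.2)).sum = y * (l.map fun p => p.1 * p.2).sum :=
      (map_listSum_helper (fun r => y * r) (mul_zero y) (fun a b => mul_add y a b) l _).symm
    rw [e1, e2, e3, ← hsum, hX.smul_one' y hy]
  -- left A-linearity of g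
  have gA : ∀ a ∈ A, ∀ m : M, g (ρM a m) = ρN a (g m) := by
    intro a ha
    have ha' : a ∈ X.toAddSubmonoid * Xinv.toAddSubmonoid :=
      mem_mul_toAddSubmonoid_helper (hX.mul_inv.symm ▸ ha)
    refine AddSubmonoid.mul_induction_on
      (C := fun a => ∀ m : M, g (ρM a m) = ρN a (g m)) ha' ?_ ?_
    · intro x hx y hy m
      rw [hM.mul_smul, gX x hx, ← hM.mul_smul, hX.one_smul' y hy, ← hL y hy m, hN.mul_smul]
    · intro r₁ r₂ h₁ h₂ m
      rw [hM.add_smul, gadd, h₁ m, h₂ m, hN.add_smul]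
  refine ⟨g, ⟨fun m _ => gAN m, fun m _ m' _ => gadd m m',
    fun a ha m _ => gA a ha m, fun m _ s => gtau m s, gX⟩, ?_⟩
  -- uniqueness
  intro g' hg' m hm
  obtain ⟨hg1, hg2, hg3, hg4, hg5⟩ := hg'
  have g'0 : g' 0 = 0 := self_add_self_helper (by
    rw [← hg2 0 (zero_mem _) 0 (zero_mem _), add_zero])
  have g'neg : ∀ m ∈ actSpan ρM A, g' (-m) = -(g' m) := by
    intro m hm
    have h := hg2 m hm (-m) (neg_mem hm)
    rw [show m + -m = (0 : M) by abel, g'0] at h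
    exact eq_neg_of_add_eq_zero_right h.symm
  have gen : ∀ a, a ∈ X.toAddSubmonoid * Xinv.toAddSubmonoid →
      a ∈ A ∧ ∀ m : M, g' (ρM a m) = g (ρM a m) := by
    intro a ha'
    refine AddSubmonoid.mul_induction_on ha' ?_ ?_
    · intro x hx y hy
      refine ⟨hX.mul_inv ▸ memMul_helper hx hy, fun m => ?_⟩
      rw [hM.mul_smul, hg5 x hx, ← gX x hx]
    · rintro r₁ r₂ ⟨hr₁, e₁⟩ ⟨hr₂, e₂⟩
      refine ⟨add_mem hr₁ hr₂, fun m => ?_⟩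
      rw [hM.add_smul, hg2 _ (hAM _ hr₁ m) _ (hAM _ hr₂ m), gadd, e₁ m, e₂ m]
  refine AddSubgroup.closure_induction (p := fun x _ => g' x = g x) ?_ ?_ ?_ ?_ hm
  · rintro x ⟨a, ha, m', rfl⟩
    exact (gen a (mem_mul_toAddSubmonoid_helper (hX.mul_inv.symm ▸ ha))).2 m'
  · show g' 0 = g 0
    rw [g'0, g0]
  · intro x y hx hy ihx ihy
    show g' (x + y) = g (x + y)
    rw [hg2 x hx y hy, gadd, ihx, ihy]
  · intro x hx ih
    show g' (-x) = g (-x)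
    rw [g'neg x hx, gneg, ih]
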